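/- For any two density operators ρ₀ and ρ₁ on a finite-dimensional Hilbert space, 1 - (1/2)‖ρ₀ - ρ₁‖₁ ≤ F(ρ₀, ρ₁) ≤ sqrt(1 - (1/4)‖ρ₀ - ρ₁‖₁²), where F(ρ₀,ρ₁) = ‖√ρ₀ √ρ₁‖₁ is the fidelity and ‖·‖₁ is the trace norm. -/

import Mathlib

open Matrix
open scoped ComplexOrder

/-- The square root of a positive semidefinite matrix (as `Matrix.PosSemidef.sqrt` was defined in
Mathlib of December 2024; it has since been removed from Mathlib). -/
noncomputable def Matrix.PosSemidef.sqrt {n : Type*} [Fintype n] [DecidableEq n] {𝕜 : Type*}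
    [RCLike 𝕜] {A : Matrix n n 𝕜} (hA : A.PosSemidef) : Matrix n n 𝕜 :=
  hA.1.eigenvectorUnitary.1 * diagonal ((↑) ∘ (√·) ∘ hA.1.eigenvalues) *
  (star hA.1.eigenvectorUnitary : Matrix n n 𝕜)

namespace Matrix.PosSemidef

open scoped MatrixOrder

lemma sqrt_eq_cfcSqrt {n : Type*} [Fintype n] [DecidableEq n] {A : Matrix n n ℂ}
    (hA : A.PosSemidef) : hA.sqrt = CFC.sqrt A := by
  rw [CFC.sqrt_eq_real_sqrt A hA.nonneg, cfcₙ_eq_cfc, hA.1.cfc_eq, IsHermitian.cfc,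
    Unitary.conjStarAlgAut_apply]
  rfl

lemma posSemidef_sqrt {n : Type*} [Fintype n] [DecidableEq n] {A : Matrix n n ℂ}
    (hA : A.PosSemidef) : hA.sqrt.PosSemidef := by
  rw [sqrt_eq_cfcSqrt]
  exact (CFC.sqrt_nonneg A).posSemidef

lemma sqrt_mul_self {n : Type*} [Fintype n] [DecidableEq n] {A : Matrix n n ℂ}
    (hA : A.PosSemidef) : hA.sqrt * hA.sqrt = A := by
  rw [sqrt_eq_cfcSqrt]
  exact CFC.sqrt_mul_sqrt_self A hA.nonneg

lemma eq_sqrt_of_sq_eq {n : Type*} [Fintype n] [DecidableEq n] {A : Matrix n n ℂ}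
    (hA : A.PosSemidef) {B : Matrix n n ℂ} (hB : B.PosSemidef) (h : A ^ 2 = B) :
    A = hB.sqrt := by
  rw [sqrt_eq_cfcSqrt]
  exact (CFC.sqrt_unique (by rw [← sq, h]) hA.nonneg).symm

end Matrix.PosSemidef

/-- The trace norm of a matrix: `tr √(AᴴA)`, i.e. the sum of singular values. -/
noncomputable def traceNorm {n : Type*} [Fintype n] [DecidableEq n]
    (A : Matrix n n ℂ) : ℝ :=
  ((Matrix.posSemidef_conjTranspose_mul_self A).sqrt.trace).re

namespace FvG

variable {n : Type*} [Fintype n] [DecidableEq n]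

local notation "⟪" x ", " y "⟫" => @inner ℂ _ _ x y

noncomputable def L (A : Matrix n n ℂ) (x : EuclideanSpace ℂ n) : EuclideanSpace ℂ n :=
  Matrix.toEuclideanLin A x

lemma L_mul (A B : Matrix n n ℂ) (x : EuclideanSpace ℂ n) :
    L (A * B) x = L A (L B x) := by
  simp only [L, Matrix.toEuclideanLin_apply]
  exact congrArg _ (by simp [Matrix.mulVec_mulVec])

lemma inner_L_left (A : Matrix n n ℂ) (x y : EuclideanSpace ℂ n) :
    ⟪L Aᴴ x, y⟫ = ⟪x, L A y⟫ := by
  simp only [L, Matrix.toEuclideanLin_conjTranspose_eq_adjoint]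
  exact LinearMap.adjoint_inner_left _ _ _

/-- trace over an orthonormal basis -/
lemma trace_eq_sum_inner (A : Matrix n n ℂ) (b : OrthonormalBasis n ℂ (EuclideanSpace ℂ n)) :
    A.trace = ∑ j, ⟪b j, L A (b j)⟫ := by
  classical
  set U : Matrix n n ℂ := (EuclideanSpace.basisFun n ℂ).toBasis.toMatrix b.toBasis with hU
  have hUmem : U ∈ Matrix.unitaryGroup n ℂ :=
    (EuclideanSpace.basisFun n ℂ).toMatrix_orthonormalBasis_mem_unitary b
  have hUentry : ∀ i j, U i j = b j i := fun i j => rfl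
  have h1 : star U * U = 1 := hUmem.1
  have h2 : U * star U = 1 := mul_eq_one_comm.mp h1
  have key : A.trace = (star U * A * U).trace := by
    rw [Matrix.trace_mul_cycle, h2, one_mul]
  rw [key, Matrix.trace]
  apply Finset.sum_congr rfl
  intro j _
  have lhs : (star U * A * U) j j = ∑ i, ∑ k, star (b j i) * (A i k * b j k) := by
    rw [mul_assoc, Matrix.mul_apply]
    refine Finset.sum_congr rfl fun i _ => ?_
    rw [Matrix.mul_apply, Finset.mul_sum]
    refine Finset.sum_congr rfl fun k _ => ?_
    simp [Matrix.star_apply, hUentry]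
  have rhs : ⟪b j, L A (b j)⟫ = ∑ i, ∑ k, star (b j i) * (A i k * b j k) := by
    rw [EuclideanSpace.inner_eq_star_dotProduct]
    simp only [dotProduct, Pi.star_apply, L, Matrix.toEuclideanLin_apply,
      Matrix.mulVec, dotProduct, Finset.sum_mul]
    exact Finset.sum_congr rfl fun i _ => Finset.sum_congr rfl fun k _ => by ring
  rw [Matrix.diag_apply, lhs, rhs]

lemma inner_L_left' (A : Matrix n n ℂ) (x y : EuclideanSpace ℂ n) :
    ⟪L A x, y⟫ = ⟪x, L Aᴴ y⟫ := by
  conv_lhs => rw [show A = Aᴴᴴ from (Matrix.conjTranspose_conjTranspose A).symm]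
  exact inner_L_left Aᴴ x y

lemma L_eigen {A : Matrix n n ℂ} (hA : A.IsHermitian) (j : n) :
    L A (hA.eigenvectorBasis j) = (hA.eigenvalues j : ℂ) • hA.eigenvectorBasis j := by
  apply PiLp.ext
  intro i
  simp only [L, Matrix.toEuclideanLin_apply]
  rw [hA.mulVec_eigenvectorBasis]
  simp [PiLp.smul_apply, Complex.real_smul]

section eigen

variable (X : Matrix n n ℂ)

/-- shorthand for the PSD matrix `XᴴX` -/
abbrev hPSD : (Xᴴ * X).PosSemidef := Matrix.posSemidef_conjTranspose_mul_self X

/-- eigenbasis of `XᴴX` -/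
noncomputable abbrev eb : OrthonormalBasis n ℂ (EuclideanSpace ℂ n) :=
  (hPSD X).1.eigenvectorBasis

/-- eigenvalues of `XᴴX` -/
noncomputable abbrev ev : n → ℝ := (hPSD X).1.eigenvalues

lemma ev_nonneg (j : n) : 0 ≤ ev X j := (hPSD X).eigenvalues_nonneg j

lemma inner_L_L (i j : n) :
    ⟪L X (eb X i), L X (eb X j)⟫ = if i = j then ((ev X j : ℂ)) else 0 := by
  rw [inner_L_left', ← L_mul, L_eigen (hPSD X).1, inner_smul_right]
  rw [orthonormal_iff_ite.mp (eb X).orthonormal i j]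
  by_cases h : i = j <;> simp [h]

lemma norm_L_eigen (j : n) : ‖L X (eb X j)‖ = Real.sqrt (ev X j) := by
  rw [@norm_eq_sqrt_re_inner ℂ]
  congr 1
  rw [inner_L_L X j j]
  simp

lemma traceNorm_eq_sum_sqrt : traceNorm X = ∑ j, Real.sqrt (ev X j) := by
  unfold traceNorm
  rw [show (Matrix.posSemidef_conjTranspose_mul_self X).sqrt =
      (hPSD X).1.eigenvectorUnitary.1 *
        Matrix.diagonal ((↑) ∘ Real.sqrt ∘ (hPSD X).1.eigenvalues) *
        (star (hPSD X).1.eigenvectorUnitary : Matrix n n ℂ) from rfl]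
  rw [Matrix.trace_mul_cycle]
  rw [show ((star (hPSD X).1.eigenvectorUnitary : Matrix n n ℂ)) *
      ((hPSD X).1.eigenvectorUnitary : Matrix n n ℂ) = 1 from
    Unitary.coe_star_mul_self _, one_mul, Matrix.trace_diagonal]
  simp [Complex.ofReal_re]

lemma traceNorm_eq_sum_norm : traceNorm X = ∑ j, ‖L X (eb X j)‖ := by
  rw [traceNorm_eq_sum_sqrt]
  exact Finset.sum_congr rfl fun j _ => (norm_L_eigen X j).symm

end eigen

section core

lemma norm_sq_eq_inner_re (x : EuclideanSpace ℂ n) : ‖x‖ ^ 2 = (⟪x, x⟫).re := by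
  have h := @inner_self_eq_norm_sq ℂ (EuclideanSpace ℂ n) _ _ _ x
  rw [← h]
  rfl

/-- Core duality inequality: pairing a matrix against an orthonormal basis and an
orthogonal family of vectors of norm at most one is bounded by the trace norm. -/
lemma sum_inner_le_traceNorm (A : Matrix n n ℂ)
    (v : OrthonormalBasis n ℂ (EuclideanSpace ℂ n)) (u : n → EuclideanSpace ℂ n)
    (hu1 : ∀ j, ‖u j‖ ≤ 1) (hu2 : ∀ i j, i ≠ j → ⟪u i, u j⟫ = 0) :
    ∑ j, (⟪u j, L A (v j)⟫).re ≤ traceNorm A := by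
  classical
  set e := eb A with he
  set c : n → n → ℂ := fun j k => ⟪e k, v j⟫ with hc
  set y : n → EuclideanSpace ℂ n := fun k => ∑ j, (starRingEnd ℂ) (c j k) • u j with hy
  have expand : ∀ j, ⟪u j, L A (v j)⟫ = ∑ k, c j k * ⟪u j, L A (e k)⟫ := by
    intro j
    have hvj : L A (v j) = ∑ k, c j k • L A (e k) := by
      show Matrix.toEuclideanLin A (v j) = _
      conv_lhs => rw [← e.sum_repr' (v j)]
      rw [map_sum]
      exact Finset.sum_congr rfl fun k _ => by rw [_root_.map_smul]; rfl
    rw [hvj, inner_sum]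
    exact Finset.sum_congr rfl fun k _ => by rw [inner_smul_right]
  have ykey : ∀ (k : n) (z : EuclideanSpace ℂ n), ⟪y k, z⟫ = ∑ j, c j k * ⟪u j, z⟫ := by
    intro k z
    rw [hy, sum_inner]
    exact Finset.sum_congr rfl fun j _ => by
      rw [inner_smul_left, Complex.conj_conj]
  have reinle : ∀ (x z : EuclideanSpace ℂ n), (⟪x, z⟫).re ≤ ‖x‖ * ‖z‖ := fun x z =>
    re_inner_le_norm (𝕜 := ℂ) x z
  have resum : ∀ (f : n → ℂ), (∑ j, f j).re = ∑ j, (f j).re := fun f =>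
    map_sum Complex.reAddGroupHom f Finset.univ
  have swap : ∑ j, (⟪u j, L A (v j)⟫).re = ∑ k, (⟪y k, L A (e k)⟫).re := by
    calc ∑ j, (⟪u j, L A (v j)⟫).re
        = ∑ j, ∑ k, (c j k * ⟪u j, L A (e k)⟫).re := by
          refine Finset.sum_congr rfl fun j _ => ?_
          rw [expand j, resum]
      _ = ∑ k, ∑ j, (c j k * ⟪u j, L A (e k)⟫).re := Finset.sum_comm
      _ = ∑ k, (⟪y k, L A (e k)⟫).re := by
          refine Finset.sum_congr rfl fun k _ => ?_
          rw [ykey k, resum]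
  have hyk : ∀ k, ‖y k‖ ≤ 1 := by
    intro k
    have hins : ∀ j, ⟪u j, y k⟫ = (starRingEnd ℂ) (c j k) * ⟪u j, u j⟫ := by
      intro j
      rw [hy]
      simp only []
      rw [inner_sum]
      rw [Finset.sum_eq_single j (fun b _ hb => by
        rw [inner_smul_right, hu2 j b (Ne.symm hb), mul_zero]) (by simp)]
      rw [inner_smul_right]
    have hyy : (⟪y k, y k⟫).re = ∑ j, Complex.normSq (c j k) * (‖u j‖ ^ 2) := by
      rw [ykey k, resum]
      refine Finset.sum_congr rfl fun j _ => ?_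
      rw [hins j, ← mul_assoc, Complex.mul_conj, inner_self_eq_norm_sq_to_K]
      simp [← Complex.ofReal_pow, ← Complex.ofReal_mul]
    have hpars : ∑ j, ‖c j k‖ ^ 2 = 1 := by
      have h1 : ∀ j, ‖c j k‖ = ‖v.repr (e k) j‖ := by
        intro j
        rw [hc, v.repr_apply_apply]
        exact norm_inner_symm _ _
      have h2 : ∑ j, ‖c j k‖ ^ 2 = ∑ j, ‖v.repr (e k) j‖ ^ 2 := by
        exact Finset.sum_congr rfl fun j _ => by rw [h1 j]
      rw [h2]
      have h3 : ‖v.repr (e k)‖ ^ 2 = ∑ j, ‖v.repr (e k) j‖ ^ 2 := by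
        rw [EuclideanSpace.norm_eq, Real.sq_sqrt]
        exact Finset.sum_nonneg fun j _ => sq_nonneg _
      rw [← h3, LinearIsometryEquiv.norm_map]
      rw [e.orthonormal.1 k]
      norm_num
    have hb : (⟪y k, y k⟫).re ≤ 1 := by
      rw [hyy, ← hpars]
      refine Finset.sum_le_sum fun j _ => ?_
      rw [← Complex.sq_norm]
      have hu1' : ‖u j‖ ^ 2 ≤ 1 := pow_le_one₀ (norm_nonneg _) (hu1 j)
      nlinarith [sq_nonneg ‖c j k‖]
    have h5 := norm_sq_eq_inner_re (y k)
    nlinarith [norm_nonneg (y k)]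
  rw [swap, traceNorm_eq_sum_norm]
  refine Finset.sum_le_sum fun k _ => ?_
  calc (⟪y k, L A (e k)⟫).re ≤ ‖y k‖ * ‖L A (e k)‖ := reinle _ _
    _ ≤ 1 * ‖L A (e k)‖ := by
        have := norm_nonneg (L A (e k))
        nlinarith [hyk k]
    _ = ‖L A (e k)‖ := one_mul _

end core

lemma re_inner_le_norm' (x z : EuclideanSpace ℂ n) : (⟪x, z⟫).re ≤ ‖x‖ * ‖z‖ :=
  re_inner_le_norm (𝕜 := ℂ) x z

lemma re_sum {α : Type*} (s : Finset α) (f : α → ℂ) :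
    (∑ j ∈ s, f j).re = ∑ j ∈ s, (f j).re :=
  map_sum Complex.reAddGroupHom f s

/-- A dual witness achieving the trace norm. -/
lemma exists_dual (X : Matrix n n ℂ) :
    ∃ (v : OrthonormalBasis n ℂ (EuclideanSpace ℂ n)) (u : n → EuclideanSpace ℂ n),
      (∀ j, ‖u j‖ ≤ 1) ∧ (∀ i j, i ≠ j → ⟪u i, u j⟫ = 0) ∧
      (∀ j, ⟪u j, L X (v j)⟫ = (‖L X (v j)‖ : ℂ)) ∧
      traceNorm X = ∑ j, ‖L X (v j)‖ := by
  classical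
  refine ⟨eb X, fun j => if h : L X (eb X j) = 0 then 0 else
      ((‖L X (eb X j)‖ : ℂ))⁻¹ • L X (eb X j), ?_, ?_, ?_, traceNorm_eq_sum_norm X⟩
  · intro j
    beta_reduce
    by_cases h : L X (eb X j) = 0
    · simp [h]
    · rw [dif_neg h, norm_smul]
      have hn : ‖L X (eb X j)‖ ≠ 0 := norm_ne_zero_iff.mpr h
      rw [norm_inv]
      have : ‖((‖L X (eb X j)‖ : ℂ))‖ = ‖L X (eb X j)‖ := by
        simp [Complex.norm_real]
      rw [this]
      rw [inv_mul_cancel₀ hn]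
  · intro i j hij
    beta_reduce
    by_cases hi : L X (eb X i) = 0
    · simp [hi]
    by_cases hj : L X (eb X j) = 0
    · simp [hj]
    rw [dif_neg hi, dif_neg hj, inner_smul_left, inner_smul_right]
    rw [inner_L_L X i j, if_neg hij]
    simp
  · intro j
    beta_reduce
    by_cases h : L X (eb X j) = 0
    · simp [h]
    · rw [dif_neg h, inner_smul_left, inner_self_eq_norm_sq_to_K, map_inv₀,
        Complex.conj_ofReal]
      have hn : (‖L X (eb X j)‖ : ℂ) ≠ 0 := by
        simpa using norm_ne_zero_iff.mpr h
      field_simp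
      rfl

lemma L_add (A B : Matrix n n ℂ) (x : EuclideanSpace ℂ n) :
    L (A + B) x = L A x + L B x := by
  show Matrix.toEuclideanLin (A + B) x = _
  rw [map_add]
  rfl

lemma traceNorm_add_le (A B : Matrix n n ℂ) :
    traceNorm (A + B) ≤ traceNorm A + traceNorm B := by
  obtain ⟨v, u, h1, h2, h3, h4⟩ := exists_dual (A + B)
  have key : traceNorm (A + B)
      = ∑ j, (⟪u j, L A (v j)⟫).re + ∑ j, (⟪u j, L B (v j)⟫).re := by
    rw [h4, ← Finset.sum_add_distrib]
    refine Finset.sum_congr rfl fun j _ => ?_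
    have : (‖L (A + B) (v j)‖ : ℂ).re = ‖L (A + B) (v j)‖ := Complex.ofReal_re _
    rw [← this, ← h3 j, L_add, inner_add_right]
    rfl
  rw [key]
  exact add_le_add (sum_inner_le_traceNorm A v u h1 h2) (sum_inner_le_traceNorm B v u h1 h2)

lemma re_trace_le_traceNorm (A : Matrix n n ℂ) : A.trace.re ≤ traceNorm A := by
  rw [trace_eq_sum_inner A (eb A), re_sum]
  refine sum_inner_le_traceNorm A (eb A) (fun j => eb A j) (fun j => le_of_eq ((eb A).orthonormal.1 j)) ?_
  intro i j hij
  rw [orthonormal_iff_ite.mp (eb A).orthonormal i j, if_neg hij]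

/-- Bessel-type inequality for an orthogonal family with norms at most one. -/
lemma bessel (u : n → EuclideanSpace ℂ n) (hu1 : ∀ j, ‖u j‖ ≤ 1)
    (hu2 : ∀ i j, i ≠ j → ⟪u i, u j⟫ = 0) (x : EuclideanSpace ℂ n) :
    ∑ j, ‖⟪u j, x⟫‖ ^ 2 ≤ ‖x‖ ^ 2 := by
  classical
  set p : n → Prop := fun j => u j ≠ 0 with hp
  set v' : {j // p j} → EuclideanSpace ℂ n := fun j => ((‖u (j : n)‖ : ℂ))⁻¹ • u (j : n) with hv'
  have hnz : ∀ j : {j // p j}, (‖u (j : n)‖ : ℂ) ≠ 0 := fun j => by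
    simpa using norm_ne_zero_iff.mpr j.2
  have hon : Orthonormal ℂ v' := by
    rw [orthonormal_iff_ite]
    intro i j
    by_cases hij : i = j
    · subst hij
      rw [if_pos rfl, hv']
      simp only []
      rw [inner_smul_left, inner_smul_right, inner_self_eq_norm_sq_to_K, map_inv₀,
        Complex.conj_ofReal]
      field_simp
      rw [sq, sq]
      exact div_self (mul_ne_zero (hnz i) (hnz i))
    · have hne : (i : n) ≠ (j : n) := fun h => hij (Subtype.ext h)
      rw [if_neg hij, hv']
      simp only []
      rw [inner_smul_left, inner_smul_right, hu2 _ _ hne, mul_zero, mul_zero]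
  have hb := hon.sum_inner_products_le (s := Finset.univ) x
  have hterm : ∀ j : {j // p j}, ‖⟪u (j : n), x⟫‖ ^ 2 ≤ ‖⟪v' j, x⟫‖ ^ 2 := by
    intro j
    have : ⟪v' j, x⟫ = ((‖u (j : n)‖ : ℂ))⁻¹ * ⟪u (j : n), x⟫ := by
      rw [hv']
      simp only []
      rw [inner_smul_left, map_inv₀, Complex.conj_ofReal]
    rw [this, norm_mul, norm_inv]
    have h1 : ‖((‖u (j : n)‖ : ℂ))‖ = ‖u (j : n)‖ := by simp [Complex.norm_real]
    rw [h1, mul_pow, inv_pow]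
    have h2 : (0:ℝ) < ‖u (j : n)‖ := norm_pos_iff.mpr j.2
    have h4 : ‖u (j : n)‖ ^ 2 ≤ 1 := pow_le_one₀ (norm_nonneg _) (hu1 _)
    have h5 : (0:ℝ) < ‖u (j : n)‖ ^ 2 := by positivity
    have h6 : ‖u (j : n)‖ ^ 2 * (‖u (j : n)‖ ^ 2)⁻¹ = 1 := mul_inv_cancel₀ (ne_of_gt h5)
    have h7 : (0:ℝ) ≤ (‖u (j : n)‖ ^ 2)⁻¹ := by positivity
    nlinarith [mul_nonneg h7 (sq_nonneg ‖⟪u (j : n), x⟫‖), sq_nonneg ‖⟪u (j : n), x⟫‖]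
  have hsplit : ∑ j, ‖⟪u j, x⟫‖ ^ 2 = ∑ j : {j // p j}, ‖⟪u (j : n), x⟫‖ ^ 2 := by
    rw [← Finset.sum_subtype (Finset.univ.filter p) (fun j => by simp [hp]) (fun j => ‖⟪u j, x⟫‖ ^ 2)]
    rw [Finset.sum_filter]
    refine Finset.sum_congr rfl fun j _ => ?_
    by_cases h : p j
    · rw [if_pos h]
    · rw [if_neg h]
      have : u j = 0 := by simpa [hp] using h
      simp [this]
  calc ∑ j, ‖⟪u j, x⟫‖ ^ 2 = ∑ j : {j // p j}, ‖⟪u (j : n), x⟫‖ ^ 2 := hsplit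
    _ ≤ ∑ j : {j // p j}, ‖⟪v' j, x⟫‖ ^ 2 := Finset.sum_le_sum fun j _ => hterm j
    _ ≤ ‖x‖ ^ 2 := hb

lemma trace_eq_sum_eigenvalues {G : Matrix n n ℂ} (hG : G.IsHermitian) :
    G.trace = ∑ k, (hG.eigenvalues k : ℂ) := by
  rw [trace_eq_sum_inner G hG.eigenvectorBasis]
  refine Finset.sum_congr rfl fun k _ => ?_
  rw [L_eigen hG k, inner_smul_right,
    orthonormal_iff_ite.mp hG.eigenvectorBasis.orthonormal k k, if_pos rfl, mul_one]

lemma sum_inner_psd_le_trace {G : Matrix n n ℂ} (hG : G.PosSemidef)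
    (u : n → EuclideanSpace ℂ n) (hu1 : ∀ j, ‖u j‖ ≤ 1)
    (hu2 : ∀ i j, i ≠ j → ⟪u i, u j⟫ = 0) :
    ∑ j, (⟪u j, L G (u j)⟫).re ≤ G.trace.re := by
  set w := hG.1.eigenvectorBasis with hw
  set γ := hG.1.eigenvalues with hγ
  have htr : G.trace.re = ∑ k, γ k := by
    rw [trace_eq_sum_eigenvalues hG.1, re_sum]
    simp
    rfl
  have hterm : ∀ j, (⟪u j, L G (u j)⟫).re = ∑ k, γ k * ‖⟪w k, u j⟫‖ ^ 2 := by
    intro j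
    have hexp : L G (u j) = ∑ k, (⟪w k, u j⟫ * (γ k : ℂ)) • w k := by
      show Matrix.toEuclideanLin G (u j) = _
      conv_lhs => rw [← w.sum_repr' (u j)]
      rw [map_sum]
      refine Finset.sum_congr rfl fun k _ => ?_
      rw [_root_.map_smul, show Matrix.toEuclideanLin G (w k) = L G (w k) from rfl,
        L_eigen hG.1 k, smul_smul]
    rw [hexp, inner_sum, re_sum]
    refine Finset.sum_congr rfl fun k _ => ?_
    rw [inner_smul_right, show ⟪u j, w k⟫ = (starRingEnd ℂ) ⟪w k, u j⟫ from
      (inner_conj_symm _ _).symm]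
    have hz : ⟪w k, u j⟫ * (γ k : ℂ) * (starRingEnd ℂ) ⟪w k, u j⟫
        = ((γ k * ‖⟪w k, u j⟫‖ ^ 2 : ℝ) : ℂ) := by
      rw [mul_comm (⟪w k, u j⟫) ((γ k : ℂ)), mul_assoc, Complex.mul_conj]
      rw [show (Complex.normSq ⟪w k, u j⟫ : ℂ) = ((‖⟪w k, u j⟫‖ ^ 2 : ℝ) : ℂ) by
        norm_cast; rw [← Complex.sq_norm]]
      norm_cast
    rw [hz, Complex.ofReal_re]
  calc ∑ j, (⟪u j, L G (u j)⟫).re = ∑ j, ∑ k, γ k * ‖⟪w k, u j⟫‖ ^ 2 :=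
        Finset.sum_congr rfl fun j _ => hterm j
    _ = ∑ k, ∑ j, γ k * ‖⟪w k, u j⟫‖ ^ 2 := Finset.sum_comm
    _ ≤ ∑ k, γ k := by
        refine Finset.sum_le_sum fun k _ => ?_
        rw [← Finset.mul_sum]
        have hbes : ∑ j, ‖⟪u j, w k⟫‖ ^ 2 ≤ 1 := by
          have := bessel u hu1 hu2 (w k)
          rwa [w.orthonormal.1 k, one_pow] at this
        have hsw : ∑ j, ‖⟪w k, u j⟫‖ ^ 2 = ∑ j, ‖⟪u j, w k⟫‖ ^ 2 :=
          Finset.sum_congr rfl fun j _ => by rw [norm_inner_symm]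
        have hγk : 0 ≤ γ k := hG.eigenvalues_nonneg k
        calc γ k * ∑ j, ‖⟪w k, u j⟫‖ ^ 2 ≤ γ k * 1 := by
              rw [hsw]; exact mul_le_mul_of_nonneg_left hbes hγk
          _ = γ k := mul_one _
    _ = G.trace.re := htr.symm

/-- Hölder / Cauchy–Schwarz inequality for the trace norm of a product. -/
lemma traceNorm_mul_le (B C : Matrix n n ℂ) :
    traceNorm (B * C) ≤ Real.sqrt ((Bᴴ * B).trace.re) * Real.sqrt ((Cᴴ * C).trace.re) := by
  obtain ⟨v, u, h1, h2, h3, h4⟩ := exists_dual (B * C)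
  have key : traceNorm (B * C) = ∑ j, (⟪L Bᴴ (u j), L C (v j)⟫).re := by
    rw [h4]
    refine Finset.sum_congr rfl fun j _ => ?_
    rw [← Complex.ofReal_re (‖L (B * C) (v j)‖ : ℝ), ← h3 j, L_mul, inner_L_left]
  have hC2 : ∑ j, ‖L C (v j)‖ ^ 2 = (Cᴴ * C).trace.re := by
    rw [trace_eq_sum_inner _ v, re_sum]
    refine Finset.sum_congr rfl fun j _ => ?_
    rw [L_mul, ← inner_L_left' C, ← norm_sq_eq_inner_re]
  have hB2 : ∑ j, ‖L Bᴴ (u j)‖ ^ 2 ≤ (Bᴴ * B).trace.re := by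
    have heach : ∀ j, ‖L Bᴴ (u j)‖ ^ 2 = (⟪u j, L (B * Bᴴ) (u j)⟫).re := by
      intro j
      rw [L_mul, ← inner_L_left B, ← norm_sq_eq_inner_re]
    have := sum_inner_psd_le_trace (Matrix.posSemidef_self_mul_conjTranspose B) u h1 h2
    rw [Matrix.trace_mul_comm] at this
    calc ∑ j, ‖L Bᴴ (u j)‖ ^ 2 = ∑ j, (⟪u j, L (B * Bᴴ) (u j)⟫).re :=
          Finset.sum_congr rfl fun j _ => heach j
      _ ≤ (Bᴴ * B).trace.re := this
  have hCS := Finset.sum_mul_sq_le_sq_mul_sq Finset.univ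
      (fun j => ‖L Bᴴ (u j)‖) (fun j => ‖L C (v j)‖)
  have hnn : (0:ℝ) ≤ ∑ j, ‖L Bᴴ (u j)‖ * ‖L C (v j)‖ :=
    Finset.sum_nonneg fun j _ => mul_nonneg (norm_nonneg _) (norm_nonneg _)
  calc traceNorm (B * C) = ∑ j, (⟪L Bᴴ (u j), L C (v j)⟫).re := key
    _ ≤ ∑ j, ‖L Bᴴ (u j)‖ * ‖L C (v j)‖ :=
        Finset.sum_le_sum fun j _ => re_inner_le_norm' _ _
    _ ≤ Real.sqrt ((∑ j, ‖L Bᴴ (u j)‖ ^ 2) * (∑ j, ‖L C (v j)‖ ^ 2)) := by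
        rw [← Real.sqrt_sq hnn]
        exact Real.sqrt_le_sqrt hCS
    _ = Real.sqrt (∑ j, ‖L Bᴴ (u j)‖ ^ 2) * Real.sqrt (∑ j, ‖L C (v j)‖ ^ 2) :=
        Real.sqrt_mul (Finset.sum_nonneg fun j _ => sq_nonneg _) _
    _ ≤ Real.sqrt ((Bᴴ * B).trace.re) * Real.sqrt ((Cᴴ * C).trace.re) := by
        rw [hC2]
        exact mul_le_mul_of_nonneg_right (Real.sqrt_le_sqrt hB2) (Real.sqrt_nonneg _)

lemma L_sub (A B : Matrix n n ℂ) (x : EuclideanSpace ℂ n) :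
    L (A - B) x = L A x - L B x := by
  show Matrix.toEuclideanLin (A - B) x = _
  rw [map_sub]
  rfl

lemma psd_inner_nonneg {G : Matrix n n ℂ} (hG : G.PosSemidef) (x : EuclideanSpace ℂ n) :
    0 ≤ (⟪x, L G x⟫).re := by
  have h := hG.re_dotProduct_nonneg ((WithLp.equiv 2 (n → ℂ)) x)
  rw [EuclideanSpace.inner_eq_star_dotProduct, dotProduct_comm]
  exact h

lemma psd_trace_re_nonneg {G : Matrix n n ℂ} (hG : G.PosSemidef) : 0 ≤ G.trace.re := by
  rw [trace_eq_sum_eigenvalues hG.1, re_sum]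
  refine Finset.sum_nonneg fun k _ => ?_
  rw [Complex.ofReal_re]
  exact hG.eigenvalues_nonneg k

lemma trace_mul_psd_nonneg {E ρ : Matrix n n ℂ} (hE : E.PosSemidef) (hρ : ρ.PosSemidef) :
    0 ≤ (E * ρ).trace.re := by
  have h1 : E * ρ = hE.sqrt * hE.sqrt * ρ := by rw [hE.sqrt_mul_self]
  have h2 : (hE.sqrt * hE.sqrt * ρ).trace = (hE.sqrt * ρ * hE.sqrt).trace := by
    rw [Matrix.trace_mul_cycle hE.sqrt ρ hE.sqrt]
  have h3 : (hE.sqrt * ρ * hE.sqrt).PosSemidef := by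
    have := hρ.conjTranspose_mul_mul_same hE.sqrt
    rwa [hE.posSemidef_sqrt.1.eq] at this
  rw [h1, h2]
  exact psd_trace_re_nonneg h3

/-- sum of absolute values of the real diagonal (w.r.t. an onb) is at most the trace norm -/
lemma sum_abs_re_diag_le (M : Matrix n n ℂ) (w : OrthonormalBasis n ℂ (EuclideanSpace ℂ n)) :
    ∑ j, |(⟪w j, L M (w j)⟫).re| ≤ traceNorm M := by
  classical
  set ε : n → ℝ := fun j => if 0 ≤ (⟪w j, L M (w j)⟫).re then 1 else -1 with hε
  set u : n → EuclideanSpace ℂ n := fun j => ((ε j : ℝ) : ℂ) • w j with hu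
  have hεn : ∀ j, ‖((ε j : ℝ) : ℂ)‖ = 1 := by
    intro j
    by_cases h : 0 ≤ (⟪w j, L M (w j)⟫).re
    · rw [hε]; beta_reduce; rw [if_pos h]; norm_num
    · rw [hε]; beta_reduce; rw [if_neg h]; norm_num
  have h1 : ∀ j, ‖u j‖ ≤ 1 := by
    intro j
    rw [hu]
    simp only []
    rw [norm_smul, hεn j, w.orthonormal.1 j, mul_one]
  have h2 : ∀ i j, i ≠ j → ⟪u i, u j⟫ = 0 := by
    intro i j hij
    rw [hu]
    simp only []
    rw [inner_smul_left, inner_smul_right,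
      orthonormal_iff_ite.mp w.orthonormal i j, if_neg hij, mul_zero, mul_zero]
  have h3 : ∀ j, (⟪u j, L M (w j)⟫).re = |(⟪w j, L M (w j)⟫).re| := by
    intro j
    rw [hu]
    simp only []
    rw [inner_smul_left, Complex.conj_ofReal, Complex.mul_re, Complex.ofReal_re,
      Complex.ofReal_im, zero_mul, sub_zero, hε]
    beta_reduce
    by_cases h : 0 ≤ (⟪w j, L M (w j)⟫).re
    · rw [if_pos h, one_mul, abs_of_nonneg h]
    · rw [if_neg h, abs_of_neg (lt_of_not_ge h)]
      ring
  calc ∑ j, |(⟪w j, L M (w j)⟫).re| = ∑ j, (⟪u j, L M (w j)⟫).re :=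
        Finset.sum_congr rfl fun j _ => (h3 j).symm
    _ ≤ traceNorm M := sum_inner_le_traceNorm M w u h1 h2

section unitaryConj

variable {V : Matrix n n ℂ} (hV : V ∈ Matrix.unitaryGroup n ℂ)

include hV

lemma star_mul_self_eq_one : star V * V = 1 := hV.1

lemma mul_star_self_eq_one : V * star V = 1 := mul_eq_one_comm.mp hV.1

lemma conj_diag_mul (d e : n → ℂ) :
    (V * Matrix.diagonal d * star V) * (V * Matrix.diagonal e * star V)
      = V * Matrix.diagonal (fun i => d i * e i) * star V := by
  have h1 : star V * V = 1 := hV.1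
  calc (V * Matrix.diagonal d * star V) * (V * Matrix.diagonal e * star V)
      = V * Matrix.diagonal d * (star V * V) * Matrix.diagonal e * star V := by
        simp only [mul_assoc]
    _ = V * (Matrix.diagonal d * Matrix.diagonal e) * star V := by
        rw [h1]
        simp only [mul_assoc, one_mul]
    _ = V * Matrix.diagonal (fun i => d i * e i) * star V := by
        rw [Matrix.diagonal_mul_diagonal]

lemma trace_conj_diag (d : n → ℂ) :
    (V * Matrix.diagonal d * star V).trace = ∑ i, d i := by
  rw [Matrix.trace_mul_cycle, hV.1, one_mul, Matrix.trace_diagonal]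

lemma psd_conj_diag (d : n → ℂ) (hd : ∀ i, 0 ≤ d i) :
    (V * Matrix.diagonal d * star V).PosSemidef := by
  have h := (Matrix.posSemidef_diagonal_iff.mpr hd).mul_mul_conjTranspose_same V
  rwa [← Matrix.star_eq_conjTranspose] at h

lemma herm_conj_diag (d : n → ℝ) :
    (V * Matrix.diagonal (fun i => (d i : ℂ)) * star V).IsHermitian := by
  have hdiag : (Matrix.diagonal (fun i => (d i : ℂ))).IsHermitian :=
    Matrix.isHermitian_diagonal_of_self_adjoint _
      (funext fun i => Complex.conj_ofReal (d i))
  have h := Matrix.isHermitian_mul_mul_conjTranspose V hdiag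
  rwa [← Matrix.star_eq_conjTranspose] at h

end unitaryConj

lemma traceNorm_hermitian {H : Matrix n n ℂ} (hH : H.IsHermitian) :
    traceNorm H = ∑ i, |hH.eigenvalues i| := by
  set V : Matrix n n ℂ := (hH.eigenvectorUnitary : Matrix n n ℂ) with hVdef
  have hV : V ∈ Matrix.unitaryGroup n ℂ := hH.eigenvectorUnitary.2
  set μ := hH.eigenvalues with hμ
  have hspec : H = V * Matrix.diagonal (fun i => (μ i : ℂ)) * star V := hH.spectral_theorem
  set S : Matrix n n ℂ := V * Matrix.diagonal (fun i => ((|μ i| : ℝ) : ℂ)) * star V with hSdef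
  have hS : S.PosSemidef := psd_conj_diag hV _ (fun i => by
    rw [Complex.zero_le_real]
    exact abs_nonneg _)
  have hsq : S ^ 2 = Hᴴ * H := by
    rw [pow_two, hH.eq, hSdef, conj_diag_mul hV]
    conv_rhs => rw [hspec]
    rw [conj_diag_mul hV]
    have hfun : (fun i => ((|μ i| : ℝ) : ℂ) * ((|μ i| : ℝ) : ℂ))
        = fun i => ((μ i : ℝ) : ℂ) * ((μ i : ℝ) : ℂ) := by
      funext i
      rw [← Complex.ofReal_mul, ← Complex.ofReal_mul, abs_mul_abs_self]
    rw [hfun]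
  have hkey : S = (Matrix.posSemidef_conjTranspose_mul_self H).sqrt :=
    hS.eq_sqrt_of_sq_eq _ hsq
  unfold traceNorm
  rw [← hkey, hSdef, trace_conj_diag hV, re_sum]
  exact Finset.sum_congr rfl fun i _ => Complex.ofReal_re _

lemma powers_stormer {A B : Matrix n n ℂ} (hA : A.PosSemidef) (hB : B.PosSemidef) :
    ((hA.sqrt - hB.sqrt) * (hA.sqrt - hB.sqrt)).trace.re ≤ traceNorm (A - B) := by
  set S := hA.sqrt with hSd
  set T := hB.sqrt with hTd
  have hSh : S.IsHermitian := hA.posSemidef_sqrt.1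
  have hTh : T.IsHermitian := hB.posSemidef_sqrt.1
  set C := S - T with hCd
  set D := S + T with hDd
  have hCh : C.IsHermitian := hSh.sub hTh
  set w := hCh.eigenvectorBasis with hw
  set γ := hCh.eigenvalues with hγd
  have hCw : ∀ i, L C (w i) = (γ i : ℂ) • w i := fun i => L_eigen hCh i
  have hww : ∀ i, ⟪w i, w i⟫ = 1 := fun i => by
    rw [orthonormal_iff_ite.mp w.orthonormal i i, if_pos rfl]
  have hCD : C * D + D * C = (A - B) + (A - B) := by
    have ha : S * S = A := hA.sqrt_mul_self
    have hb : T * T = B := hB.sqrt_mul_self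
    have : C * D + D * C = (S * S - T * T) + (S * S - T * T) := by
      rw [hCd, hDd]; noncomm_ring
    rw [this, ha, hb]
  have hdiag : ∀ i, (⟪w i, L (A - B) (w i)⟫).re = γ i * (⟪w i, L D (w i)⟫).re := by
    intro i
    have e1 : ⟪w i, L (C * D) (w i)⟫ = (γ i : ℂ) * ⟪w i, L D (w i)⟫ := by
      rw [L_mul, ← inner_L_left C, hCh.eq, hCw i, inner_smul_left, Complex.conj_ofReal]
    have e2 : ⟪w i, L (D * C) (w i)⟫ = (γ i : ℂ) * ⟪w i, L D (w i)⟫ := by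
      rw [L_mul, hCw i,
        show L D ((γ i : ℂ) • w i) = (γ i : ℂ) • L D (w i) from
          map_smul (Matrix.toEuclideanLin D) _ _,
        inner_smul_right]
    have e4 : ⟪w i, L (A - B) (w i)⟫ + ⟪w i, L (A - B) (w i)⟫
        = ⟪w i, L (C * D) (w i)⟫ + ⟪w i, L (D * C) (w i)⟫ := by
      rw [← inner_add_right, ← inner_add_right, ← L_add, ← L_add, hCD]
    rw [e1, e2] at e4
    have e5 := congrArg Complex.re e4
    rw [Complex.add_re, Complex.add_re] at e5
    have e6 : ((γ i : ℂ) * ⟪w i, L D (w i)⟫).re = γ i * (⟪w i, L D (w i)⟫).re := by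
      rw [Complex.mul_re, Complex.ofReal_re, Complex.ofReal_im, zero_mul, sub_zero]
    rw [e6] at e5
    linarith
  have hCre : ∀ i, (⟪w i, L C (w i)⟫).re = γ i := by
    intro i
    rw [hCw i, inner_smul_right, hww i, mul_one, Complex.ofReal_re]
  have hDpos : ∀ i, |γ i| ≤ (⟪w i, L D (w i)⟫).re := by
    intro i
    have h1 : (0:ℝ) ≤ (⟪w i, L (D - C) (w i)⟫).re := by
      have hdc : D - C = T + T := by rw [hDd, hCd]; abel
      rw [hdc]
      exact psd_inner_nonneg (hB.posSemidef_sqrt.add hB.posSemidef_sqrt) _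
    have h2 : (0:ℝ) ≤ (⟪w i, L (D + C) (w i)⟫).re := by
      have hdc : D + C = S + S := by rw [hDd, hCd]; abel
      rw [hdc]
      exact psd_inner_nonneg (hA.posSemidef_sqrt.add hA.posSemidef_sqrt) _
    rw [L_sub, inner_sub_right, Complex.sub_re, hCre i] at h1
    rw [L_add, inner_add_right, Complex.add_re, hCre i] at h2
    exact abs_le.mpr ⟨by linarith, by linarith⟩
  have htr : ((C * C).trace).re = ∑ i, γ i * γ i := by
    rw [trace_eq_sum_inner (C * C) w, re_sum]
    refine Finset.sum_congr rfl fun i _ => ?_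
    rw [L_mul, hCw i,
      show L C ((γ i : ℂ) • w i) = (γ i : ℂ) • L C (w i) from
        map_smul (Matrix.toEuclideanLin C) _ _,
      hCw i, smul_smul, inner_smul_right, hww i, mul_one, ← Complex.ofReal_mul,
      Complex.ofReal_re]
  calc ((C * C).trace).re = ∑ i, γ i * γ i := htr
    _ ≤ ∑ i, |(⟪w i, L (A - B) (w i)⟫).re| := by
        refine Finset.sum_le_sum fun i _ => ?_
        rw [hdiag i, abs_mul]
        have h2 : |γ i| ≤ |(⟪w i, L D (w i)⟫).re| := le_trans (hDpos i) (le_abs_self _)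
        calc γ i * γ i = |γ i| * |γ i| := (abs_mul_abs_self _).symm
          _ ≤ |γ i| * |(⟪w i, L D (w i)⟫).re| :=
              mul_le_mul_of_nonneg_left h2 (abs_nonneg _)
    _ ≤ traceNorm (A - B) := sum_abs_re_diag_le _ w

lemma holder_proj (S₀ S₁ P : Matrix n n ℂ) (hS₀ : S₀ᴴ = S₀) (hS₁ : S₁ᴴ = S₁)
    (hP : Pᴴ = P) (hPP : P * P = P) :
    traceNorm (S₀ * P * S₁) ≤
      Real.sqrt ((P * (S₀ * S₀)).trace.re) * Real.sqrt ((P * (S₁ * S₁)).trace.re) := by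
  have hsplit : S₀ * P * S₁ = (S₀ * P) * (P * S₁) := by
    rw [show (S₀ * P) * (P * S₁) = S₀ * (P * P) * S₁ by noncomm_ring, hPP]
  have h1 : ((S₀ * P)ᴴ * (S₀ * P)).trace = (P * (S₀ * S₀)).trace := by
    rw [Matrix.conjTranspose_mul, hP, hS₀,
      show P * S₀ * (S₀ * P) = (P * (S₀ * S₀)) * P by noncomm_ring,
      Matrix.trace_mul_comm,
      show P * (P * (S₀ * S₀)) = (P * P) * (S₀ * S₀) by noncomm_ring, hPP]
  have h2 : ((P * S₁)ᴴ * (P * S₁)).trace = (P * (S₁ * S₁)).trace := by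
    rw [Matrix.conjTranspose_mul, hP, hS₁,
      show S₁ * P * (P * S₁) = S₁ * ((P * P) * S₁) by noncomm_ring, hPP,
      Matrix.trace_mul_comm,
      show P * S₁ * S₁ = P * (S₁ * S₁) by noncomm_ring]
  have h := traceNorm_mul_le (S₀ * P) (P * S₁)
  rw [h1, h2] at h
  rw [hsplit]
  exact h

lemma sqrt_numeric {p q : ℝ} (hp0 : 0 ≤ p) (hp1 : p ≤ 1) (hq0 : 0 ≤ q) (hq1 : q ≤ 1) :
    Real.sqrt p * Real.sqrt q + Real.sqrt (1 - p) * Real.sqrt (1 - q)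
      ≤ Real.sqrt (1 - (p - q) ^ 2) := by
  set x := Real.sqrt p
  set y := Real.sqrt q
  set z := Real.sqrt (1 - p)
  set w := Real.sqrt (1 - q)
  have hx : x ^ 2 = p := Real.sq_sqrt hp0
  have hy : y ^ 2 = q := Real.sq_sqrt hq0
  have hz : z ^ 2 = 1 - p := Real.sq_sqrt (by linarith)
  have hw : w ^ 2 = 1 - q := Real.sq_sqrt (by linarith)
  have hxn : 0 ≤ x := Real.sqrt_nonneg _
  have hyn : 0 ≤ y := Real.sqrt_nonneg _
  have hzn : 0 ≤ z := Real.sqrt_nonneg _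
  have hwn : 0 ≤ w := Real.sqrt_nonneg _
  have hnn : 0 ≤ x * y + z * w := by positivity
  have key : (x * y + z * w) ^ 2 ≤ 1 - (p - q) ^ 2 := by
    nlinarith [sq_nonneg (x * z - y * w)]
  calc x * y + z * w = Real.sqrt ((x * y + z * w) ^ 2) := (Real.sqrt_sq hnn).symm
    _ ≤ Real.sqrt (1 - (p - q) ^ 2) := Real.sqrt_le_sqrt key

end FvG

/-- The fidelity `F(ρ,σ) = ‖√ρ √σ‖₁` of two positive semidefinite matrices. -/
noncomputable def fidelity {n : Type*} [Fintype n] [DecidableEq n]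
    {ρ σ : Matrix n n ℂ} (hρ : ρ.PosSemidef) (hσ : σ.PosSemidef) : ℝ :=
  traceNorm (hρ.sqrt * hσ.sqrt)

/-- A density operator: PSD with unit trace. -/
def IsDensity {n : Type*} [Fintype n] [DecidableEq n] (ρ : Matrix n n ℂ) : Prop :=
  ρ.PosSemidef ∧ ρ.trace = 1

open FvG

/-- Fuchs–van de Graaf inequalities. -/
theorem fuchs_van_de_graaf {n : Type*} [Fintype n] [DecidableEq n]
    {ρ₀ ρ₁ : Matrix n n ℂ} (h₀ : IsDensity ρ₀) (h₁ : IsDensity ρ₁) :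
    1 - (1 / 2) * traceNorm (ρ₀ - ρ₁) ≤ fidelity h₀.1 h₁.1 ∧
    fidelity h₀.1 h₁.1 ≤ Real.sqrt (1 - (1 / 4) * traceNorm (ρ₀ - ρ₁) ^ 2) := by
  classical
  set S₀ := h₀.1.sqrt with hS₀d
  set S₁ := h₁.1.sqrt with hS₁d
  have hS₀h : S₀.IsHermitian := h₀.1.posSemidef_sqrt.1
  have hS₁h : S₁.IsHermitian := h₁.1.posSemidef_sqrt.1
  have hfid : fidelity h₀.1 h₁.1 = traceNorm (S₀ * S₁) := rfl
  set T : ℝ := traceNorm (ρ₀ - ρ₁) with hTd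
  -- lower bound
  have lower : 1 - (1 / 2) * T ≤ fidelity h₀.1 h₁.1 := by
    have hps := powers_stormer h₀.1 h₁.1
    have hexp : (S₀ - S₁) * (S₀ - S₁) = ρ₀ + ρ₁ - (S₀ * S₁ + S₁ * S₀) := by
      have e0 : S₀ * S₀ = ρ₀ := h₀.1.sqrt_mul_self
      have e1 : S₁ * S₁ = ρ₁ := h₁.1.sqrt_mul_self
      rw [← e0, ← e1]; noncomm_ring
    have htrace : ((S₀ - S₁) * (S₀ - S₁)).trace.re = 2 - 2 * ((S₀ * S₁).trace.re) := by
      rw [hexp, Matrix.trace_sub, Matrix.trace_add, Matrix.trace_add,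
        Matrix.trace_mul_comm S₁ S₀, h₀.2, h₁.2]
      rw [Complex.sub_re, Complex.add_re, Complex.add_re, Complex.one_re]
      ring
    have hF : (S₀ * S₁).trace.re ≤ fidelity h₀.1 h₁.1 := by
      rw [hfid]; exact re_trace_le_traceNorm _
    rw [htrace] at hps
    rw [← hTd] at hps
    linarith
  -- upper bound setup
  have hHh : (ρ₀ - ρ₁).IsHermitian := h₀.1.1.sub h₁.1.1
  set μ := hHh.eigenvalues with hμd
  set V : Matrix n n ℂ := (hHh.eigenvectorUnitary : Matrix n n ℂ) with hVd
  have hV : V ∈ Matrix.unitaryGroup n ℂ := hHh.eigenvectorUnitary.2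
  have hspec : ρ₀ - ρ₁ = V * Matrix.diagonal (fun i => (μ i : ℂ)) * star V :=
    hHh.spectral_theorem
  set χ : n → ℝ := fun i => if 0 ≤ μ i then 1 else 0 with hχd
  have hχ0 : ∀ i, 0 ≤ χ i := fun i => by
    rw [hχd]; beta_reduce; split_ifs <;> norm_num
  have hχ1 : ∀ i, χ i ≤ 1 := fun i => by
    rw [hχd]; beta_reduce; split_ifs <;> norm_num
  set E : Matrix n n ℂ := V * Matrix.diagonal (fun i => (χ i : ℂ)) * star V with hEd
  have hE : E.PosSemidef := psd_conj_diag hV _ (fun i => by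
    rw [Complex.zero_le_real]; exact hχ0 i)
  have hEH : Eᴴ = E := herm_conj_diag hV χ
  have hEE : E * E = E := by
    rw [hEd, conj_diag_mul hV]
    have hfun : (fun i => (χ i : ℂ) * (χ i : ℂ)) = fun i => (χ i : ℂ) := by
      funext i
      rw [hχd]; beta_reduce; split_ifs <;> norm_num
    rw [hfun]
  have h1E : (1 : Matrix n n ℂ) - E
      = V * Matrix.diagonal (fun i => ((1 - χ i : ℝ) : ℂ)) * star V := by
    have hc : (fun i : n => ((1 - χ i : ℝ) : ℂ))
        = fun i : n => (1 : ℂ) - (χ i : ℂ) := by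
      funext i; push_cast; ring
    have hd : Matrix.diagonal (fun i : n => (1 : ℂ) - (χ i : ℂ))
        = Matrix.diagonal (fun _ : n => (1:ℂ)) - Matrix.diagonal (fun i => (χ i : ℂ)) := by
      rw [← Matrix.diagonal_sub]
    rw [hc, hd]
    rw [Matrix.mul_sub, Matrix.sub_mul]
    rw [show Matrix.diagonal (fun _ : n => (1:ℂ)) = (1 : Matrix n n ℂ) from Matrix.diagonal_one]
    rw [mul_one, mul_star_self_eq_one hV]
  have h1Epsd : ((1 : Matrix n n ℂ) - E).PosSemidef := by
    rw [h1E]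
    exact psd_conj_diag hV _ (fun i => by
      rw [Complex.zero_le_real]; linarith [hχ1 i])
  have h1EH : ((1 : Matrix n n ℂ) - E)ᴴ = 1 - E := by
    rw [h1E]; exact herm_conj_diag hV _
  have h1EE : ((1 : Matrix n n ℂ) - E) * (1 - E) = 1 - E := by
    have hx : ((1 : Matrix n n ℂ) - E) * (1 - E) = 1 - E - E + E * E := by noncomm_ring
    rw [hx, hEE]; abel
  set p := (E * ρ₀).trace.re with hpd
  set q := (E * ρ₁).trace.re with hqd
  have hp0 : 0 ≤ p := trace_mul_psd_nonneg hE h₀.1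
  have hq0 : 0 ≤ q := trace_mul_psd_nonneg hE h₁.1
  have hp1 : p ≤ 1 := by
    have h := trace_mul_psd_nonneg h1Epsd h₀.1
    rw [Matrix.sub_mul, Matrix.one_mul, Matrix.trace_sub, Complex.sub_re, h₀.2,
      Complex.one_re] at h
    linarith
  have hq1 : q ≤ 1 := by
    have h := trace_mul_psd_nonneg h1Epsd h₁.1
    rw [Matrix.sub_mul, Matrix.one_mul, Matrix.trace_sub, Complex.sub_re, h₁.2,
      Complex.one_re] at h
    linarith
  have hμsum : ∑ i, μ i = 0 := by
    have h := trace_eq_sum_eigenvalues hHh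
    rw [Matrix.trace_sub, h₀.2, h₁.2, sub_self] at h
    have h2 := congrArg Complex.re h.symm
    rw [re_sum] at h2
    simpa using h2
  have hTsum : T = ∑ i, |μ i| := traceNorm_hermitian hHh
  have hpq : p - q = T / 2 := by
    have hEmul : E * (ρ₀ - ρ₁)
        = V * Matrix.diagonal (fun i => (χ i : ℂ) * (μ i : ℂ)) * star V := by
      conv_lhs => rw [hspec, hEd]
      rw [conj_diag_mul hV]
    have htr : (E * (ρ₀ - ρ₁)).trace.re = ∑ i, χ i * μ i := by
      rw [hEmul, trace_conj_diag hV, re_sum]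
      exact Finset.sum_congr rfl fun i _ => by
        rw [← Complex.ofReal_mul, Complex.ofReal_re]
    have hlhs : (E * (ρ₀ - ρ₁)).trace.re = p - q := by
      rw [Matrix.mul_sub, Matrix.trace_sub, Complex.sub_re]
    have hsum : ∑ i, χ i * μ i = ((∑ i, |μ i|) + ∑ i, μ i) / 2 := by
      rw [← Finset.sum_add_distrib, Finset.sum_div]
      refine Finset.sum_congr rfl fun i _ => ?_
      rw [hχd]; beta_reduce
      by_cases h : 0 ≤ μ i
      · rw [if_pos h, one_mul, abs_of_nonneg h]; ring
      · rw [if_neg h, zero_mul, abs_of_neg (lt_of_not_ge h)]; ring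
    have : p - q = ((∑ i, |μ i|) + ∑ i, μ i) / 2 := by rw [← hlhs, htr, hsum]
    rw [this, hμsum, hTsum]
    ring
  -- fidelity split
  have hsplit : S₀ * S₁ = S₀ * E * S₁ + S₀ * (1 - E) * S₁ := by noncomm_ring
  have hF1 : fidelity h₀.1 h₁.1
      ≤ traceNorm (S₀ * E * S₁) + traceNorm (S₀ * (1 - E) * S₁) := by
    rw [hfid, hsplit]
    exact traceNorm_add_le _ _
  have hH1 : traceNorm (S₀ * E * S₁) ≤ Real.sqrt p * Real.sqrt q := by
    have h := holder_proj S₀ S₁ E hS₀h.eq hS₁h.eq hEH hEE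
    rw [show S₀ * S₀ = ρ₀ from h₀.1.sqrt_mul_self,
      show S₁ * S₁ = ρ₁ from h₁.1.sqrt_mul_self] at h
    exact h
  have hH2 : traceNorm (S₀ * (1 - E) * S₁)
      ≤ Real.sqrt (1 - p) * Real.sqrt (1 - q) := by
    have h := holder_proj S₀ S₁ (1 - E) hS₀h.eq hS₁h.eq h1EH h1EE
    rw [show S₀ * S₀ = ρ₀ from h₀.1.sqrt_mul_self,
      show S₁ * S₁ = ρ₁ from h₁.1.sqrt_mul_self] at h
    have e0 : ((1 - E) * ρ₀).trace.re = 1 - p := by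
      rw [Matrix.sub_mul, Matrix.one_mul, Matrix.trace_sub, Complex.sub_re, h₀.2,
        Complex.one_re]
    have e1 : ((1 - E) * ρ₁).trace.re = 1 - q := by
      rw [Matrix.sub_mul, Matrix.one_mul, Matrix.trace_sub, Complex.sub_re, h₁.2,
        Complex.one_re]
    rw [e0, e1] at h
    exact h
  have upper : fidelity h₀.1 h₁.1 ≤ Real.sqrt (1 - (1 / 4) * T ^ 2) := by
    have hnum := sqrt_numeric hp0 hp1 hq0 hq1
    have heq : 1 - (p - q) ^ 2 = 1 - (1 / 4) * T ^ 2 := by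
      rw [hpq]; ring
    rw [heq] at hnum
    calc fidelity h₀.1 h₁.1
        ≤ traceNorm (S₀ * E * S₁) + traceNorm (S₀ * (1 - E) * S₁) := hF1
      _ ≤ Real.sqrt p * Real.sqrt q + Real.sqrt (1 - p) * Real.sqrt (1 - q) :=
          add_le_add hH1 hH2
      _ ≤ Real.sqrt (1 - (1 / 4) * T ^ 2) := hnum
  exact ⟨lower, upper⟩
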